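/- Let G be a single unicast index coding problem on [N] such that the cyclic permutation σ of [N] defined by σ(i) = (i mod N) + 1 is an automorphism of G, and let (E, D_1,...,D_N) be a valid index code for G with broadcast rate β and locality r. Then there exists a valid index code for G (over the same alphabet) with broadcast rate β and locality at most r whose query sets R'_1,...,R'_N satisfy: (i) |R'_1| = |R'_2| = ... = |R'_N|, and (ii) |R'_1 ∩ R'_2| = |R'_2 ∩ R'_3| = ... = |R'_{N−1} ∩ R'_N| = |R'_N ∩ R'_1|. -/

import Mathlib

/-- The "time-shared" query set in `Fin N × Fin ℓ`: in block `t` we query the set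
`R (i - t)`, i.e. the query set of the code shifted by `t`. -/
def shiftSet {N ℓ : ℕ} [NeZero N] (R : Fin N → Finset (Fin ℓ)) (i : Fin N) :
    Finset (Fin N × Fin ℓ) :=
  Finset.univ.biUnion fun t => {t} ×ˢ R (i - t)

lemma mem_shiftSet {N ℓ : ℕ} [NeZero N] {R : Fin N → Finset (Fin ℓ)} {i : Fin N}
    {p : Fin N × Fin ℓ} : p ∈ shiftSet R i ↔ p.2 ∈ R (i - p.1) := by
  constructor
  · intro h
    simp only [shiftSet, Finset.mem_biUnion, Finset.mem_product, Finset.mem_singleton] at h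
    obtain ⟨t, -, ht, h2⟩ := h
    rwa [← ht] at h2
  · intro h
    simp only [shiftSet, Finset.mem_biUnion, Finset.mem_product, Finset.mem_singleton]
    exact ⟨p.1, Finset.mem_univ _, rfl, h⟩

/-- The time-shared query set, transported to `Fin (N * ℓ)`. -/
def shiftSet' {N ℓ : ℕ} [NeZero N] (R : Fin N → Finset (Fin ℓ)) (i : Fin N) :
    Finset (Fin (N * ℓ)) :=
  (shiftSet R i).image finProdFinEquiv

lemma card_shiftSet {N ℓ : ℕ} [NeZero N] (R : Fin N → Finset (Fin ℓ)) (i : Fin N) :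
    (shiftSet R i).card = ∑ s : Fin N, (R s).card := by
  rw [shiftSet, Finset.card_biUnion]
  · have h2 := Fintype.sum_equiv (Equiv.subLeft i) (fun t => (R (i - t)).card)
      (fun s => (R s).card) (fun t => by simp)
    rw [← h2]
    exact Finset.sum_congr rfl fun t _ => by
      rw [Finset.card_product, Finset.card_singleton, one_mul]
  · intro t _ t' _ hne
    rw [Function.onFun, Finset.disjoint_left]
    rintro ⟨a, b⟩ h h'
    simp only [Finset.mem_product, Finset.mem_singleton] at h h'
    exact hne (h.1 ▸ h'.1 ▸ rfl)

lemma card_shiftSet' {N ℓ : ℕ} [NeZero N] (R : Fin N → Finset (Fin ℓ)) (i : Fin N) :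
    (shiftSet' R i).card = ∑ s : Fin N, (R s).card := by
  rw [shiftSet', Finset.card_image_of_injective _ finProdFinEquiv.injective, card_shiftSet]

open Fin.CommRing in
lemma card_inter_shiftSet {N ℓ : ℕ} [NeZero N] (R : Fin N → Finset (Fin ℓ)) (i : Fin N) :
    (shiftSet R i ∩ shiftSet R (i + 1)).card = (shiftSet R 0 ∩ shiftSet R 1).card := by
  refine Finset.card_bij' (fun p _ => (p.1 - i, p.2)) (fun q _ => (q.1 + i, q.2)) ?_ ?_ ?_ ?_
  · rintro ⟨a, b⟩ h
    rw [Finset.mem_inter, mem_shiftSet, mem_shiftSet] at h ⊢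
    refine ⟨?_, ?_⟩
    · show b ∈ R (0 - (a - i))
      rw [show (0 : Fin N) - (a - i) = i - a by ring]; exact h.1
    · show b ∈ R (1 - (a - i))
      rw [show (1 : Fin N) - (a - i) = i + 1 - a by ring]; exact h.2
  · rintro ⟨a, b⟩ h
    rw [Finset.mem_inter, mem_shiftSet, mem_shiftSet] at h ⊢
    refine ⟨?_, ?_⟩
    · show b ∈ R (i - (a + i))
      rw [show i - (a + i) = 0 - a by ring]; exact h.1
    · show b ∈ R (i + 1 - (a + i))
      rw [show i + 1 - (a + i) = 1 - a by ring]; exact h.2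
  · rintro ⟨a, b⟩ _; simp
  · rintro ⟨a, b⟩ _; simp

lemma card_inter_shiftSet' {N ℓ : ℕ} [NeZero N] (R : Fin N → Finset (Fin ℓ)) (i : Fin N) :
    (shiftSet' R i ∩ shiftSet' R (i + 1)).card = (shiftSet' R 0 ∩ shiftSet' R 1).card := by
  unfold shiftSet'
  rw [← Finset.image_inter _ _ finProdFinEquiv.injective,
      ← Finset.image_inter _ _ finProdFinEquiv.injective,
      Finset.card_image_of_injective _ finProdFinEquiv.injective,
      Finset.card_image_of_injective _ finProdFinEquiv.injective]
  exact card_inter_shiftSet R i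

/-- A valid (possibly non-linear) index code for the single unicast index coding problem
with side information sets `K`, over alphabet `A`, with message length `M`, codelength `ℓ`
and query sets `R`. -/
def IsValidCode {N : ℕ} (K : Fin N → Finset (Fin N)) (A : Type) (M ℓ : ℕ)
    (R : Fin N → Finset (Fin ℓ)) : Prop :=
  ∃ E : (Fin N → Fin M → A) → (Fin ℓ → A),
    ∀ i : Fin N,
      ∃ D : ({k : Fin ℓ // k ∈ R i} → A) → ({j : Fin N // j ∈ K i} → Fin M → A) → (Fin M → A),
        ∀ x : Fin N → Fin M → A,
          D (fun k => E x k.1) (fun j => x j.1) = x i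

open Fin.CommRing in
/-- Time-sharing the given code over the `N` cyclic shifts gives a valid code for the
query sets `shiftSet' R`. -/
lemma isValidCode_shiftSet'
    {N : ℕ} [NeZero N]
    (K : Fin N → Finset (Fin N))
    (hauto : ∀ i j : Fin N, j ∈ K i ↔ j + 1 ∈ K (i + 1))
    (A : Type)
    {M ℓ : ℕ}
    (R : Fin N → Finset (Fin ℓ))
    (hvalid : IsValidCode K A M ℓ R) :
    IsValidCode K A (N * M) (N * ℓ) (shiftSet' R) := by
  obtain ⟨E, hE⟩ := hvalid
  choose D hD using hE
  have hauto' : ∀ (t i j : Fin N), j ∈ K i ↔ j + t ∈ K (i + t) := by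
    have hnat : ∀ (n : ℕ) (i j : Fin N), j ∈ K i ↔ j + (n : Fin N) ∈ K (i + (n : Fin N)) := by
      intro n
      induction n with
      | zero => simp
      | succ n ih =>
        intro i j
        have h : ((n+1 : ℕ) : Fin N) = (n : Fin N) + 1 := by push_cast; ring
        rw [h, ← add_assoc, ← add_assoc]
        exact (ih i j).trans (hauto _ _)
    intro t i j
    have := hnat t.val i j
    rwa [Fin.cast_val_eq_self] at this
  have hKmem : ∀ (i t j : Fin N), j ∈ K (i - t) → j + t ∈ K i := by
    intro i t j h
    have := (hauto' t (i - t) j).mp h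
    rwa [sub_add_cancel] at this
  have hR' : ∀ (i t : Fin N) (k : Fin ℓ), k ∈ R (i - t) →
      finProdFinEquiv (t, k) ∈ shiftSet' R i := by
    intro i t k h
    exact Finset.mem_image_of_mem _ (mem_shiftSet.mpr h)
  refine ⟨fun x c => E (fun j m => x (j + (finProdFinEquiv.symm c).1)
      (finProdFinEquiv ((finProdFinEquiv.symm c).1, m))) (finProdFinEquiv.symm c).2, ?_⟩
  intro i
  refine ⟨fun y z m' =>
    D (i - (finProdFinEquiv.symm m').1)
      (fun k => y ⟨finProdFinEquiv ((finProdFinEquiv.symm m').1, k.1),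
        hR' i (finProdFinEquiv.symm m').1 k.1 k.2⟩)
      (fun j m0 => z ⟨j.1 + (finProdFinEquiv.symm m').1,
        hKmem i (finProdFinEquiv.symm m').1 j.1 j.2⟩
        (finProdFinEquiv ((finProdFinEquiv.symm m').1, m0)))
      (finProdFinEquiv.symm m').2, ?_⟩
  intro x
  funext m'
  have key := congrFun (hD (i - (finProdFinEquiv.symm m').1)
    (fun j m0 => x (j + (finProdFinEquiv.symm m').1)
      (finProdFinEquiv ((finProdFinEquiv.symm m').1, m0)))) (finProdFinEquiv.symm m').2
  simp only [Equiv.symm_apply_apply]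
  rw [key, sub_add_cancel]
  congr 1
  exact Equiv.apply_symm_apply _ _

/-- If the cyclic shift `σ(i) = i + 1` of `Fin N` is an automorphism of the
side information graph and there is a valid index code with rate `β = ℓ/M` and locality at
most `r`, then there is a valid index code (over the same alphabet) with the same rate and
locality at most `r` whose query sets `R'` satisfy `|R'_1| = ⋯ = |R'_N|` and
`|R'_i ∩ R'_{i+1}|` constant (cyclically). -/
theorem cyclic_symmetrization
    {N : ℕ} [NeZero N]
    (K : Fin N → Finset (Fin N)) (hK : ∀ i, i ∉ K i)
    (hauto : ∀ i j : Fin N, j ∈ K i ↔ j + 1 ∈ K (i + 1))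
    (A : Type) [Fintype A] (hA : 2 ≤ Fintype.card A)
    {M ℓ : ℕ} (hM : 0 < M)
    (R : Fin N → Finset (Fin ℓ))
    (hvalid : IsValidCode K A M ℓ R)
    (r : ℝ) (hr : ∀ i, ((R i).card : ℝ) / M ≤ r) :
    ∃ (M' ℓ' : ℕ) (R' : Fin N → Finset (Fin ℓ')),
      0 < M' ∧ IsValidCode K A M' ℓ' R' ∧
      (ℓ' : ℝ) / M' = (ℓ : ℝ) / M ∧
      (∀ i, ((R' i).card : ℝ) / M' ≤ r) ∧
      (∀ i j : Fin N, (R' i).card = (R' j).card) ∧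
      (∀ i : Fin N, ((R' i) ∩ (R' (i + 1))).card = ((R' 0) ∩ (R' 1)).card) := by
  have hN : 0 < N := Nat.pos_of_ne_zero (NeZero.ne N)
  have hNR : (0 : ℝ) < N := by exact_mod_cast hN
  have hMR : (0 : ℝ) < M := by exact_mod_cast hM
  refine ⟨N * M, N * ℓ, shiftSet' R, Nat.mul_pos hN hM,
    isValidCode_shiftSet' K hauto A R hvalid, ?_, ?_, ?_, ?_⟩
  · push_cast
    rw [mul_div_mul_left _ _ (ne_of_gt hNR)]
  · intro i
    rw [card_shiftSet' R i]
    have hsum : (∑ s : Fin N, ((R s).card : ℝ)) ≤ N * (M * r) := by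
      calc (∑ s : Fin N, ((R s).card : ℝ)) ≤ ∑ _s : Fin N, (M * r : ℝ) :=
            Finset.sum_le_sum fun s _ => by
              have := hr s
              rw [div_le_iff₀ hMR] at this
              linarith [this]
          _ = N * (M * r) := by simp [Finset.sum_const, mul_comm]
    rw [div_le_iff₀ (by positivity)]
    push_cast
    calc (∑ s : Fin N, ((R s).card : ℝ)) ≤ N * (M * r) := hsum
      _ = r * (N * M) := by ring
  · intro i j
    rw [card_shiftSet', card_shiftSet']
  · intro i
    exact card_inter_shiftSet' R i
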